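/- Let G be a finite group of order n, N a normal subgroup of G, and D a central minimal normal subgroup of G with D ≤ N. Let x ∈ G and u ∈ C_n with o(xND) = o(u·C_{n,|ND|}) in the respective quotients. If there exists a bijection f̄ : xN/D → (u·C_{n,|N|})/C_{n,|D|} with o(xhD) dividing o(f̄(xhD)) for all h ∈ N, then there exists a bijection f : xN → u·C_{n,|N|} with o(xh) dividing o(f(xh)) for all h ∈ N. -/

import Mathlib

/-- `Cc n m` : the (unique, when `m ∣ n`) subgroup of order `m` of the cyclic group of
order `n`, realized as the subgroup of `Multiplicative (ZMod n)` generated by `n/m`. -/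
def Cc (n m : ℕ) : Subgroup (Multiplicative (ZMod n)) :=
  Subgroup.zpowers (Multiplicative.ofAdd ((n / m : ℕ) : ZMod n))

lemma stmt4_aux_nat {p A m : ℕ} (hp : p.Prime) (hm : 1 ≤ m)
    (h : p ∣ A / Nat.gcd A (p ^ m)) : (A / Nat.gcd A (p ^ m)) * p ∣ A := by
  set g := Nat.gcd A (p ^ m) with hg
  have hgpos : 0 < g := Nat.gcd_pos_of_pos_right _ (pow_pos hp.pos m)
  have hgA : g ∣ A := Nat.gcd_dvd_left _ _
  have hgp : g ∣ p ^ m := Nat.gcd_dvd_right _ _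
  obtain ⟨j, hjm, hgj⟩ := (Nat.dvd_prime_pow hp).mp hgp
  have hjem : j = m := by
    by_contra hne
    have hjlt : j < m := lt_of_le_of_ne hjm hne
    have h1 : g * p ∣ A := by
      obtain ⟨t, ht⟩ := h
      refine ⟨t, ?_⟩
      have := Nat.div_mul_cancel hgA
      calc A = A / g * g := (Nat.div_mul_cancel hgA).symm
        _ = p * t * g := by rw [ht]
        _ = g * p * t := by ring
    have h2 : g * p ∣ p ^ m := by
      rw [hgj, ← pow_succ]
      exact pow_dvd_pow p hjlt
    have h3 : g * p ∣ g := Nat.dvd_gcd h1 h2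
    have := Nat.le_of_dvd hgpos h3
    nlinarith [hp.one_lt]
  have hA : A / g * g = A := Nat.div_mul_cancel hgA
  have hge : g = p ^ m := by rw [hgj, hjem]
  calc (A / g) * p ∣ (A / g) * p ^ m :=
        mul_dvd_mul_left _ (dvd_pow_self p (by omega))
    _ = A := by rw [← hge, hA]

lemma stmt4_aux_ord_pow {M : Type*} [Group M] {p m : ℕ} (hp : p.Prime) (hm : 1 ≤ m)
    (b : M) (h : p ∣ orderOf (b ^ p ^ m)) : orderOf (b ^ p ^ m) * p ∣ orderOf b := by
  rw [orderOf_pow' b (pow_ne_zero m hp.ne_zero)] at h ⊢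
  exact stmt4_aux_nat hp hm h

lemma stmt4_aux_exists_root {M : Type*} [CommGroup M] {p m : ℕ} (hp : p.Prime)
    (b : M) (h : ¬ p ∣ orderOf (b ^ p ^ m)) :
    ∃ c : M, c ^ p ^ m = 1 ∧ orderOf (b * c) = orderOf (b ^ p ^ m) := by
  set y := b ^ p ^ m with hy
  set K := orderOf y with hK
  have hco : Nat.Coprime (p ^ m) K :=
    Nat.Coprime.pow_left _ ((Nat.Prime.coprime_iff_not_dvd hp).mpr h)
  -- find r with p^m * r ≡ 1 [MOD K]
  have hr : ∃ r, p ^ m * r ≡ 1 [MOD K] := by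
    rcases Nat.lt_or_ge 1 K with hK1 | hK1
    · obtain ⟨r, -, hr⟩ := Nat.exists_mul_mod_eq_one_of_coprime hco hK1
      refine ⟨r, ?_⟩
      have h1 : 1 % K = 1 := Nat.mod_eq_of_lt hK1
      unfold Nat.ModEq
      omega
    · have hK0 : K ≠ 0 := by intro h0; exact h (by rw [h0]; exact dvd_zero p)
      have h1 : K = 1 := by omega
      exact ⟨1, h1 ▸ Nat.modEq_one⟩
  obtain ⟨r, hr⟩ := hr
  have hyr : (y ^ r) ^ p ^ m = y := by
    rw [← pow_mul, mul_comm r (p ^ m)]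
    calc y ^ (p ^ m * r) = y ^ 1 := pow_eq_pow_iff_modEq.mpr (hK ▸ hr)
      _ = y := pow_one y
  refine ⟨b⁻¹ * y ^ r, ?_, ?_⟩
  · rw [mul_pow, inv_pow, hyr, ← hy, inv_mul_cancel]
  · have hb : b * (b⁻¹ * y ^ r) = y ^ r := by group
    rw [hb]
    show orderOf (y ^ r) = K
    apply Nat.dvd_antisymm
    · exact orderOf_pow_dvd r
    · calc K = orderOf ((y ^ r) ^ p ^ m) := by rw [hyr]
        _ ∣ orderOf (y ^ r) := orderOf_pow_dvd _

lemma stmt4_mem_Cc_iff {n d : ℕ} (hn : n ≠ 0) (hd : d ∣ n)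
    (w : Multiplicative (ZMod n)) : w ∈ Cc n d ↔ w ^ d = 1 := by
  haveI : NeZero n := ⟨hn⟩
  have hd0 : d ≠ 0 := by rintro rfl; exact hn (zero_dvd_iff.mp hd)
  set c : ZMod n := ((n / d : ℕ) : ZMod n) with hc
  have hdc : (d : ZMod n) * c = 0 := by
    rw [hc, ← Nat.cast_mul, Nat.mul_div_cancel' hd, ZMod.natCast_self]
  constructor
  · rintro ⟨k, rfl⟩
    show (Multiplicative.ofAdd c ^ k) ^ (d : ℕ) = 1
    rw [← zpow_natCast, ← zpow_mul, mul_comm k d, zpow_mul, zpow_natCast]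
    have h1 : (Multiplicative.ofAdd c) ^ d = 1 := by
      rw [← ofAdd_nsmul]
      simp only [nsmul_eq_mul, hdc]
      rfl
    rw [h1, one_zpow]
  · intro hw
    set z : ZMod n := Multiplicative.toAdd w with hz
    have hdz : (d : ZMod n) * z = 0 := by
      have := congrArg Multiplicative.toAdd hw
      simpa [toAdd_pow, nsmul_eq_mul] using this
    have hzv : ((d * z.val : ℕ) : ZMod n) = 0 := by
      push_cast
      rw [ZMod.natCast_zmod_val]
      exact hdz
    have hdvd : n ∣ d * z.val := (ZMod.natCast_eq_zero_iff _ _).mp hzv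
    have hnd : n = d * (n / d) := (Nat.mul_div_cancel' hd).symm
    have hdvd2 : (n / d) ∣ z.val := by
      rcases hdvd with ⟨t, ht⟩
      refine ⟨t, ?_⟩
      have ht2 : d * z.val = d * ((n / d) * t) := by
        rw [ht]
        calc n * t = d * (n / d) * t := by rw [← hnd]
          _ = d * ((n / d) * t) := by ring
      exact Nat.eq_of_mul_eq_mul_left (Nat.pos_of_ne_zero hd0) ht2
    rcases hdvd2 with ⟨t, ht⟩
    refine ⟨(t : ℤ), ?_⟩
    have : z = (t : ℕ) • c := by
      rw [hc, nsmul_eq_mul, ← Nat.cast_mul, mul_comm t (n/d), ← ht, ZMod.natCast_zmod_val]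
    show Multiplicative.ofAdd c ^ (t : ℤ) = w
    rw [zpow_natCast, ← ofAdd_nsmul, ← this, hz]
    rfl

lemma stmt4_card_Cc {n d : ℕ} (hn : n ≠ 0) (hd : d ∣ n) : Nat.card (Cc n d) = d := by
  rw [Cc, Nat.card_zpowers, orderOf_ofAdd_eq_addOrderOf, ZMod.addOrderOf_coe _ hn,
    Nat.gcd_eq_right (Nat.div_dvd_of_dvd hd), Nat.div_div_self hd hn]

lemma stmt4_Cc_le {n d e : ℕ} (hn : n ≠ 0) (hde : d ∣ e) (hen : e ∣ n) :
    Cc n d ≤ Cc n e := by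
  intro w hw
  rw [stmt4_mem_Cc_iff hn (hde.trans hen)] at hw
  rw [stmt4_mem_Cc_iff hn hen]
  rcases hde with ⟨t, rfl⟩
  rw [pow_mul, hw, one_pow]

lemma stmt4_ord_quot {n d : ℕ} (hn : n ≠ 0) (hd : d ∣ n) (v : Multiplicative (ZMod n)) :
    orderOf (QuotientGroup.mk v : Multiplicative (ZMod n) ⧸ Cc n d) = orderOf (v ^ d) := by
  have hker : ∀ w : Multiplicative (ZMod n), w ∈ Cc n d →
      (powMonoidHom d : Multiplicative (ZMod n) →* Multiplicative (ZMod n)) w = 1 :=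
    fun w hw => (stmt4_mem_Cc_iff hn hd w).mp hw
  have hinj : Function.Injective (QuotientGroup.lift (Cc n d) (powMonoidHom d) hker) := by
    intro a b
    induction a using QuotientGroup.induction_on with
    | H a =>
    induction b using QuotientGroup.induction_on with
    | H b =>
    intro hab
    have hab' : a ^ d = b ^ d := by
      simpa [powMonoidHom] using hab
    have hmem : a⁻¹ * b ∈ Cc n d := by
      rw [stmt4_mem_Cc_iff hn hd]
      show (a⁻¹ * b) ^ d = 1
      rw [mul_pow, inv_pow, hab', inv_mul_cancel]
    exact (QuotientGroup.eq).mpr hmem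
  have := (orderOf_injective (QuotientGroup.lift (Cc n d) (powMonoidHom d) hker) hinj
    (QuotientGroup.mk v)).symm
  simpa [powMonoidHom] using this

lemma stmt4_glue {G M : Type*} [Group G] [Group M] {D : Subgroup G} [D.Normal]
    {C : Subgroup M} [C.Normal] (σ : ↥D ≃ ↥C)
    {PX : G → Prop} {PY : M → Prop} {z : G ⧸ D} {v : M ⧸ C}
    {y₀ : G} {b₀ : M}
    (hy₀mk : (QuotientGroup.mk y₀ : G ⧸ D) = z) (hb₀mk : (QuotientGroup.mk b₀ : M ⧸ C) = v)
    (hPXmul : ∀ d : ↥D, PX (y₀ * d))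
    (hPYmul : ∀ c : ↥C, PY (b₀ * c))
    (hdvd : ∀ d : ↥D, orderOf (y₀ * (d : G)) ∣ orderOf (b₀ * ((σ d : ↥C) : M))) :
    ∃ e : {a : {y : G // PX y} // (QuotientGroup.mk a.1 : G ⧸ D) = z} ≃
        {b : {w : M // PY w} // (QuotientGroup.mk b.1 : M ⧸ C) = v},
      ∀ a, orderOf (a.1.1 : G) ∣ orderOf ((e a).1.1 : M) := by
  have dOf : ∀ a : {a : {y : G // PX y} // (QuotientGroup.mk a.1 : G ⧸ D) = z},
      y₀⁻¹ * a.1.1 ∈ D := fun a => (QuotientGroup.eq).mp (hy₀mk.trans a.2.symm)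
  have cOf : ∀ b : {b : {w : M // PY w} // (QuotientGroup.mk b.1 : M ⧸ C) = v},
      b₀⁻¹ * b.1.1 ∈ C := fun b => (QuotientGroup.eq).mp (hb₀mk.trans b.2.symm)
  refine ⟨⟨fun a => ⟨⟨b₀ * (σ ⟨y₀⁻¹ * a.1.1, dOf a⟩ : ↥C), hPYmul _⟩, ?_⟩,
          fun b => ⟨⟨y₀ * (σ.symm ⟨b₀⁻¹ * b.1.1, cOf b⟩ : ↥D), hPXmul _⟩, ?_⟩,
          ?_, ?_⟩, ?_⟩
  · show (QuotientGroup.mk (b₀ * _) : M ⧸ C) = v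
    rw [QuotientGroup.mk_mul, (QuotientGroup.eq_one_iff _).mpr (σ _).2, mul_one, hb₀mk]
  · show (QuotientGroup.mk (y₀ * _) : G ⧸ D) = z
    rw [QuotientGroup.mk_mul, (QuotientGroup.eq_one_iff _).mpr (σ.symm _).2, mul_one, hy₀mk]
  · intro a
    apply Subtype.ext
    apply Subtype.ext
    show y₀ * _ = a.1.1
    simp only [inv_mul_cancel_left, Subtype.coe_eta, Equiv.symm_apply_apply]
    exact mul_inv_cancel_left _ _
  · intro b
    apply Subtype.ext
    apply Subtype.ext
    show b₀ * _ = b.1.1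
    simp only [inv_mul_cancel_left, Subtype.coe_eta, Equiv.apply_symm_apply]
    exact mul_inv_cancel_left _ _
  · intro a
    have ha : a.1.1 = y₀ * ((⟨y₀⁻¹ * a.1.1, dOf a⟩ : ↥D) : G) :=
      (mul_inv_cancel_left _ _).symm
    have := hdvd ⟨y₀⁻¹ * a.1.1, dOf a⟩
    rw [← ha] at this
    exact this

lemma stmt4_D_struct {G : Type*} [Group G] [Fintype G] (D : Subgroup G) [D.Normal]
    (hDZ : D ≤ Subgroup.center G)
    (hDmin : D ≠ ⊥ ∧ ∀ K : Subgroup G, K.Normal → K ≤ D → K ≠ ⊥ → K = D) :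
    ∃ p m : ℕ, p.Prime ∧ 1 ≤ m ∧ Nat.card D = p ^ m ∧ ∀ d ∈ D, d ^ p = 1 := by
  obtain ⟨hDbot, hmin⟩ := hDmin
  haveI : Fintype ↥D := Fintype.ofFinite _
  haveI hnt : Nontrivial ↥D := (Subgroup.nontrivial_iff_ne_bot D).mpr hDbot
  have hcard1 : 1 < Fintype.card ↥D := Fintype.one_lt_card
  set q := (Fintype.card ↥D).minFac with hq
  have hqp : q.Prime := Nat.minFac_prime (by omega)
  haveI : Fact q.Prime := ⟨hqp⟩
  obtain ⟨z, hz⟩ := exists_prime_orderOf_dvd_card q (Nat.minFac_dvd _)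
  -- the q-torsion subgroup of D
  set K : Subgroup G :=
    { carrier := {g | g ∈ D ∧ g ^ q = 1}
      one_mem' := ⟨one_mem D, one_pow q⟩
      mul_mem' := by
        rintro a b ⟨haD, haq⟩ ⟨hbD, hbq⟩
        refine ⟨mul_mem haD hbD, ?_⟩
        have hc : Commute a b := ((Subgroup.mem_center_iff.mp (hDZ haD)) b).symm
        rw [hc.mul_pow, haq, hbq, one_mul]
      inv_mem' := by
        rintro a ⟨haD, haq⟩
        exact ⟨inv_mem haD, by rw [inv_pow, haq, inv_one]⟩ } with hK
  haveI hKnorm : K.Normal := by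
    constructor
    intro a ha g
    have hcomm : g * a * g⁻¹ = a := by
      have := (Subgroup.mem_center_iff.mp (hDZ ha.1)) g
      rw [this, mul_inv_cancel_right]
    rw [hcomm]; exact ha
  have hKD : K ≤ D := fun g hg => hg.1
  have hKbot : K ≠ ⊥ := by
    rw [Subgroup.ne_bot_iff_exists_ne_one]
    refine ⟨⟨(z : G), ⟨z.2, ?_⟩⟩, ?_⟩
    · have : z ^ q = 1 := by rw [← hz]; exact pow_orderOf_eq_one z
      exact congrArg Subtype.val this
    · intro h1
      have hz1 : (z : G) = 1 := congrArg Subtype.val h1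
      have : z = 1 := Subtype.ext hz1
      rw [this, orderOf_one] at hz
      exact hqp.one_lt.ne hz
  have hKeq : K = D := hmin K hKnorm hKD hKbot
  have hexp : ∀ d ∈ D, d ^ q = 1 := by
    intro d hd
    rw [← hKeq] at hd
    exact hd.2
  have hpg : IsPGroup q ↥D := by
    intro g
    refine ⟨1, ?_⟩
    apply Subtype.ext
    rw [pow_one]
    push_cast
    exact hexp g g.2
  obtain ⟨m, hm⟩ := IsPGroup.exists_card_eq hpg
  refine ⟨q, m, hqp, ?_, hm, hexp⟩
  by_contra hm0
  have : m = 0 := by omega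
  rw [this, pow_zero] at hm
  rw [Nat.card_eq_fintype_card] at hm
  omega

/-- Lifting lemma: let `G` have order `n`, `N ⊴ G`, and `D` a central minimal normal
subgroup of `G` with `D ≤ N`. Let `x ∈ G`, `u ∈ C_n` with `o(xN) = o(u C_{n,|N|})`.
If there is a bijection `f̄ : xN/D → (u C_{n,|N|})/C_{n,|D|}` with
`o(xhD) ∣ o(f̄(xhD))` for all `h ∈ N`, then there is a bijection `f : xN → u C_{n,|N|}`
with `o(xh) ∣ o(f(xh))` for all `h ∈ N`. -/
theorem stmt4 {G : Type*} [Group G] [Fintype G] (n : ℕ) (hn : n = Fintype.card G)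
    (N D : Subgroup G) [N.Normal] [D.Normal]
    (hDZ : D ≤ Subgroup.center G) (hDN : D ≤ N)
    (hDmin : D ≠ ⊥ ∧ ∀ K : Subgroup G, K.Normal → K ≤ D → K ≠ ⊥ → K = D)
    (x : G) (u : Multiplicative (ZMod n))
    (horder : orderOf (QuotientGroup.mk x : G ⧸ N)
      = orderOf (QuotientGroup.mk u : Multiplicative (ZMod n) ⧸ Cc n (Nat.card N)))
    (fbar : {y : G ⧸ D // ∃ h ∈ N, y = QuotientGroup.mk (x * h)} ≃
      {v : Multiplicative (ZMod n) ⧸ Cc n (Nat.card D) //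
        ∃ w ∈ Cc n (Nat.card N), v = QuotientGroup.mk (u * w)})
    (hfbar : ∀ y, orderOf (y : {y : G ⧸ D // ∃ h ∈ N, y = QuotientGroup.mk (x * h)}).1 ∣
      orderOf (fbar y).1) :
    ∃ f : {y : G // ∃ h ∈ N, y = x * h} ≃
        {v : Multiplicative (ZMod n) // ∃ w ∈ Cc n (Nat.card N), v = u * w},
      ∀ y, orderOf (y : {y : G // ∃ h ∈ N, y = x * h}).1 ∣ orderOf (f y).1 := by
  classical
  have hn0 : n ≠ 0 := by rw [hn]; exact Fintype.card_ne_zero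
  haveI : NeZero n := ⟨hn0⟩
  obtain ⟨p, m, hp, hm1, hcardD, hexp⟩ := stmt4_D_struct D hDZ hDmin
  have hNn : Nat.card ↥N ∣ n := by
    rw [hn, ← Nat.card_eq_fintype_card]; exact Subgroup.card_subgroup_dvd_card N
  have hDNcard : Nat.card ↥D ∣ Nat.card ↥N := Subgroup.card_dvd_of_le hDN
  have hDn : Nat.card ↥D ∣ n := hDNcard.trans hNn
  have hCle : Cc n (Nat.card ↥D) ≤ Cc n (Nat.card ↥N) := stmt4_Cc_le hn0 hDNcard hNn
  -- pointed bijection σ : D ≃ C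
  have hcardC : Nat.card (Cc n (Nat.card ↥D)) = Nat.card ↥D := stmt4_card_Cc hn0 hDn
  obtain ⟨σ0⟩ : Nonempty (↥D ≃ ↥(Cc n (Nat.card ↥D))) := Finite.card_eq.mp hcardC.symm
  set σ : ↥D ≃ ↥(Cc n (Nat.card ↥D)) := σ0.trans (Equiv.swap (σ0 1) 1) with hσdef
  have hσ1 : σ 1 = 1 := by simp [hσdef]
  have hσne : ∀ d : ↥D, d ≠ 1 → σ d ≠ 1 := by
    intro d hd h1
    exact hd (σ.injective (h1.trans hσ1.symm))
  -- the two fibration maps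
  set πX : {y : G // ∃ h ∈ N, y = x * h} →
      {y : G ⧸ D // ∃ h ∈ N, y = QuotientGroup.mk (x * h)} :=
    fun a => ⟨QuotientGroup.mk a.1, by
      obtain ⟨h, hh, e⟩ := a.2; exact ⟨h, hh, by rw [e]⟩⟩ with hπX
  set πY : {v : Multiplicative (ZMod n) // ∃ w ∈ Cc n (Nat.card ↥N), v = u * w} →
      {v : Multiplicative (ZMod n) ⧸ Cc n (Nat.card ↥D) //
        ∃ w ∈ Cc n (Nat.card ↥N), v = QuotientGroup.mk (u * w)} :=
    fun b => ⟨QuotientGroup.mk b.1, by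
      obtain ⟨w, hw, e⟩ := b.2; exact ⟨w, hw, by rw [e]⟩⟩ with hπY
  have perfiber : ∀ z, ∃ e : {a // πX a = z} ≃ {b // πY b = fbar z},
      ∀ a, orderOf (a.1.1 : G) ∣ orderOf ((e a).1.1) := by
    intro z
    obtain ⟨h0, hh0, hz0⟩ := z.2
    obtain ⟨w0, hw0, hv0⟩ := (fbar z).2
    set k := orderOf z.1 with hk
    set k'' := orderOf (fbar z).1 with hk''
    have hkk : k ∣ k'' := hfbar z
    -- fact (A)
    have hApow : ∀ y : G, (QuotientGroup.mk y : G ⧸ D) = z.1 → y ^ (k * p) = 1 := by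
      intro y hy
      have h1 : (QuotientGroup.mk y : G ⧸ D) ^ k = 1 := by
        rw [hy]; exact pow_orderOf_eq_one z.1
      have h2 : y ^ k ∈ D := by
        rw [← QuotientGroup.mk_pow] at h1
        exact (QuotientGroup.eq_one_iff _).mp h1
      rw [pow_mul]
      exact hexp _ h2
    -- fact (B)
    have hBord : ∀ b : Multiplicative (ZMod n),
        (QuotientGroup.mk b : Multiplicative (ZMod n) ⧸ Cc n (Nat.card ↥D)) = (fbar z).1 →
        orderOf (b ^ p ^ m) = k'' := by
      intro b hb
      have := stmt4_ord_quot hn0 hDn b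
      rw [hb] at this
      rw [← hcardD]
      exact this.symm
    -- produce base points with the fiberwise divisibility
    obtain ⟨y₀, hy₀x, hy₀mk, b₀, hb₀u, hb₀mk, hdvd⟩ :
        ∃ y₀ : G, (∃ h ∈ N, y₀ = x * h) ∧ (QuotientGroup.mk y₀ : G ⧸ D) = z.1 ∧
          ∃ b₀ : Multiplicative (ZMod n), (∃ w ∈ Cc n (Nat.card ↥N), b₀ = u * w) ∧
            (QuotientGroup.mk b₀ : Multiplicative (ZMod n) ⧸ Cc n (Nat.card ↥D)) = (fbar z).1 ∧
            ∀ d : ↥D, orderOf (y₀ * (d : G)) ∣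
              orderOf (b₀ * ((σ d : ↥(Cc n (Nat.card ↥D))) : Multiplicative (ZMod n))) := by
      by_cases hpk'' : p ∣ k''
      · -- easy case : all orders in the cyclic fiber are divisible by k'' * p
        refine ⟨x * h0, ⟨h0, hh0, rfl⟩, hz0.symm, u * w0, ⟨w0, hw0, rfl⟩, hv0.symm, ?_⟩
        intro d
        have h1 : (QuotientGroup.mk (x * h0 * (d : G)) : G ⧸ D) = z.1 := by
          rw [QuotientGroup.mk_mul, (QuotientGroup.eq_one_iff _).mpr d.2, mul_one, hz0]
        have h2 : orderOf (x * h0 * (d : G)) ∣ k * p :=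
          orderOf_dvd_of_pow_eq_one (hApow _ h1)
        have h3 : (QuotientGroup.mk (u * w0 * ((σ d : ↥(Cc n (Nat.card ↥D)))
            : Multiplicative (ZMod n))) : Multiplicative (ZMod n) ⧸ Cc n (Nat.card ↥D))
            = (fbar z).1 := by
          rw [QuotientGroup.mk_mul, (QuotientGroup.eq_one_iff _).mpr (σ d).2, mul_one, hv0]
        have h4 := hBord _ h3
        have h5 : k'' * p ∣ orderOf (u * w0 * ((σ d : ↥(Cc n (Nat.card ↥D)))
            : Multiplicative (ZMod n))) := by
          have h6 := stmt4_aux_ord_pow hp hm1 (u * w0 * ((σ d : ↥(Cc n (Nat.card ↥D)))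
            : Multiplicative (ZMod n))) (by rw [h4]; exact hpk'')
          rwa [h4] at h6
        exact h2.trans ((mul_dvd_mul_right hkk p).trans h5)
      · -- hard case : p ∤ k''
        have hpk : ¬ p ∣ k := fun hd => hpk'' (hd.trans hkk)
        -- build y₀ with y₀ ^ k = 1
        have hddD : (x * h0) ^ k ∈ D := by
          have h1 : (QuotientGroup.mk (x * h0) : G ⧸ D) ^ k = 1 := by
            rw [← hz0]; exact pow_orderOf_eq_one z.1
          rw [← QuotientGroup.mk_pow] at h1
          exact (QuotientGroup.eq_one_iff _).mp h1
        obtain ⟨r, hr⟩ : ∃ r, k * r ≡ 1 [MOD p] := by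
          obtain ⟨r, -, hr⟩ := Nat.exists_mul_mod_eq_one_of_coprime
            ((Nat.Prime.coprime_iff_not_dvd hp).mpr hpk).symm hp.one_lt
          exact ⟨r, by unfold Nat.ModEq; rw [hr, Nat.mod_eq_of_lt hp.one_lt]⟩
        set dd := (x * h0) ^ k with hdd
        set d' := dd⁻¹ ^ r with hd'
        have hd'D : d' ∈ D := pow_mem (inv_mem hddD) r
        have hd'k : d' ^ k = dd⁻¹ := by
          rw [hd', ← pow_mul]
          have hop : orderOf (dd⁻¹) ∣ p :=
            orderOf_dvd_of_pow_eq_one (hexp _ (inv_mem hddD))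
          have hmod : r * k ≡ 1 [MOD orderOf (dd⁻¹)] :=
            Nat.ModEq.of_dvd hop (by rw [mul_comm]; exact hr)
          calc dd⁻¹ ^ (r * k) = dd⁻¹ ^ 1 := pow_eq_pow_iff_modEq.mpr hmod
            _ = dd⁻¹ := pow_one _
        set y₀ := x * h0 * d' with hy₀
        have hcomm : Commute (x * h0) d' :=
          (Subgroup.mem_center_iff.mp (hDZ hd'D) (x * h0))
        have hy₀k : y₀ ^ k = 1 := by
          rw [hy₀, hcomm.mul_pow, ← hdd, hd'k, mul_inv_cancel]
        have hy₀mk : (QuotientGroup.mk y₀ : G ⧸ D) = z.1 := by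
          rw [hy₀, QuotientGroup.mk_mul, (QuotientGroup.eq_one_iff _).mpr hd'D,
            mul_one, hz0]
        -- build b₀ of order exactly k''
        have hb1ord : orderOf ((u * w0) ^ p ^ m) = k'' := hBord _ hv0.symm
        obtain ⟨c, hc1, hc2⟩ := stmt4_aux_exists_root hp (u * w0)
          (by rw [hb1ord]; exact hpk'')
        have hcC : c ∈ Cc n (Nat.card ↥D) := by
          rw [stmt4_mem_Cc_iff hn0 hDn, hcardD]; exact hc1
        set b₀ := u * w0 * c with hb₀
        have hb₀mk : (QuotientGroup.mk b₀ : Multiplicative (ZMod n) ⧸ Cc n (Nat.card ↥D))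
            = (fbar z).1 := by
          rw [hb₀, QuotientGroup.mk_mul, (QuotientGroup.eq_one_iff _).mpr hcC, mul_one, hv0]
        have hb₀ord : orderOf b₀ = k'' := by rw [hb₀]; rw [hc2, hb1ord]
        refine ⟨y₀, ⟨h0 * d', mul_mem hh0 (hDN hd'D), by rw [hy₀, mul_assoc]⟩, hy₀mk,
          b₀, ⟨w0 * c, mul_mem hw0 (hCle hcC), by rw [hb₀, mul_assoc]⟩, hb₀mk, ?_⟩
        intro d
        by_cases hd1 : d = 1
        · subst hd1
          rw [hσ1]
          simp only [OneMemClass.coe_one, mul_one]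
          have h1 : orderOf y₀ ∣ k := orderOf_dvd_of_pow_eq_one hy₀k
          rw [hb₀ord]
          exact h1.trans hkk
        · have h1 : (QuotientGroup.mk (y₀ * (d : G)) : G ⧸ D) = z.1 := by
            rw [QuotientGroup.mk_mul, (QuotientGroup.eq_one_iff _).mpr d.2, mul_one, hy₀mk]
          have h2 : orderOf (y₀ * (d : G)) ∣ k * p :=
            orderOf_dvd_of_pow_eq_one (hApow _ h1)
          set c' : ↥(Cc n (Nat.card ↥D)) := σ d with hc'
          have hc'1 : (c' : Multiplicative (ZMod n)) ≠ 1 := by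
            intro hcc
            exact hσne d hd1 (by rw [← hc']; exact Subtype.ext hcc)
          have hc'pm : ((c' : Multiplicative (ZMod n))) ^ p ^ m = 1 := by
            have h9 := (stmt4_mem_Cc_iff hn0 hDn _).mp c'.2
            rw [← hcardD]
            exact h9
          have hc'dvd : orderOf (c' : Multiplicative (ZMod n)) ∣ p ^ m :=
            orderOf_dvd_of_pow_eq_one hc'pm
          obtain ⟨j, hjm, hjeq⟩ := (Nat.dvd_prime_pow hp).mp hc'dvd
          have hj0 : j ≠ 0 := by
            intro hj
            rw [hj, pow_zero] at hjeq
            exact hc'1 (orderOf_eq_one_iff.mp hjeq)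
          have hco : (orderOf b₀).Coprime (orderOf (c' : Multiplicative (ZMod n))) := by
            rw [hb₀ord, hjeq]
            exact (((Nat.Prime.coprime_iff_not_dvd hp).mpr hpk'').symm).pow_right j
          have hmul : orderOf (b₀ * (c' : Multiplicative (ZMod n)))
              = orderOf b₀ * orderOf (c' : Multiplicative (ZMod n)) :=
            (Commute.all _ _).orderOf_mul_eq_mul_orderOf_of_coprime hco
          rw [hmul, hb₀ord, hjeq]
          exact h2.trans (mul_dvd_mul hkk (dvd_pow_self p hj0))
    -- glue the fiber bijection
    have hPXmul : ∀ d : ↥D, (fun y => ∃ h ∈ N, y = x * h) (y₀ * (d : G)) := by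
      intro d
      obtain ⟨h', hh', he'⟩ := hy₀x
      exact ⟨h' * d, mul_mem hh' (hDN d.2), by rw [he', mul_assoc]⟩
    have hPYmul : ∀ c : ↥(Cc n (Nat.card ↥D)),
        (fun v => ∃ w ∈ Cc n (Nat.card ↥N), v = u * w)
          (b₀ * (c : Multiplicative (ZMod n))) := by
      intro c
      obtain ⟨w', hw', he'⟩ := hb₀u
      exact ⟨w' * c, mul_mem hw' (hCle c.2), by rw [he', mul_assoc]⟩
    obtain ⟨e0, he0⟩ := stmt4_glue (PX := fun y => ∃ h ∈ N, y = x * h)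
      (PY := fun v => ∃ w ∈ Cc n (Nat.card ↥N), v = u * w) σ hy₀mk hb₀mk hPXmul hPYmul hdvd
    have hpx : ∀ a : {y : G // ∃ h ∈ N, y = x * h},
        (πX a = z) ↔ ((QuotientGroup.mk a.1 : G ⧸ D) = z.1) := by
      intro a
      rw [Subtype.ext_iff]
    have hpy : ∀ b : {v : Multiplicative (ZMod n) // ∃ w ∈ Cc n (Nat.card ↥N), v = u * w},
        ((QuotientGroup.mk b.1 : Multiplicative (ZMod n) ⧸ Cc n (Nat.card ↥D)) = (fbar z).1)
          ↔ (πY b = fbar z) := by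
      intro b
      rw [Subtype.ext_iff]
    refine ⟨(Equiv.subtypeEquivRight hpx).trans (e0.trans (Equiv.subtypeEquivRight hpy)), ?_⟩
    intro a
    exact he0 ((Equiv.subtypeEquivRight hpx) a)
  choose e he using perfiber
  refine ⟨(Equiv.sigmaFiberEquiv πX).symm.trans
    ((Equiv.sigmaCongr fbar e).trans (Equiv.sigmaFiberEquiv πY)), ?_⟩
  intro y
  exact he (πX y) ⟨y, rfl⟩
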